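/- arXiv:2309.12806 — 2 statements merged into one kernel-verified Lean document; each statement's English description precedes it below -/
import Mathlib

section
/- Let p < q be primes and α > 1 a real number. Suppose there exist nonnegative integers e, f, g, h such that 1 < p^f/q^e < α and 1 < q^h/p^g < α. Then every integer n of the form p^ℓ * q^k with n ≥ p^g * q^e has the property that the interval [n, nα) contains an integer of the form p^a * q^b with a, b ≥ 0. Specifically: if k ≥ e then p^{ℓ+f} * q^{k−e} ∈ [n, nα), and if ℓ ≥ g then p^{ℓ−g} * q^{k+h} ∈ [n, nα). -/
theorem stmt_11 (p q : ℕ) (hp : p.Prime) (hq : q.Prime) (hpq : p < q)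
    (α : ℝ) (hα : 1 < α) (e f g h : ℕ)
    (h1 : 1 < (p : ℝ) ^ f / (q : ℝ) ^ e ∧ (p : ℝ) ^ f / (q : ℝ) ^ e < α)
    (h2 : 1 < (q : ℝ) ^ h / (p : ℝ) ^ g ∧ (q : ℝ) ^ h / (p : ℝ) ^ g < α)
    (ℓ k : ℕ) (hn : p ^ g * q ^ e ≤ p ^ ℓ * q ^ k) :
    (e ≤ k →
      ((p ^ ℓ * q ^ k : ℕ) : ℝ) ≤ ((p ^ (ℓ + f) * q ^ (k - e) : ℕ) : ℝ) ∧
        ((p ^ (ℓ + f) * q ^ (k - e) : ℕ) : ℝ) < ((p ^ ℓ * q ^ k : ℕ) : ℝ) * α) ∧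
    (g ≤ ℓ →
      ((p ^ ℓ * q ^ k : ℕ) : ℝ) ≤ ((p ^ (ℓ - g) * q ^ (k + h) : ℕ) : ℝ) ∧
        ((p ^ (ℓ - g) * q ^ (k + h) : ℕ) : ℝ) < ((p ^ ℓ * q ^ k : ℕ) : ℝ) * α) ∧
    (∃ a b : ℕ, ((p ^ ℓ * q ^ k : ℕ) : ℝ) ≤ ((p ^ a * q ^ b : ℕ) : ℝ) ∧
        ((p ^ a * q ^ b : ℕ) : ℝ) < ((p ^ ℓ * q ^ k : ℕ) : ℝ) * α) := by
  have hp0 : (0:ℝ) < (p:ℝ) := by exact_mod_cast hp.pos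
  have hq0 : (0:ℝ) < (q:ℝ) := by exact_mod_cast hq.pos
  have hqe : (0:ℝ) < (q:ℝ)^e := by positivity
  have hpg : (0:ℝ) < (p:ℝ)^g := by positivity
  have hA : (q:ℝ)^e < (p:ℝ)^f := by
    have := (one_lt_div hqe).mp h1.1; linarith
  have hB : (p:ℝ)^f < α * (q:ℝ)^e := by
    have := (div_lt_iff₀ hqe).mp h1.2; linarith
  have hC : (p:ℝ)^g < (q:ℝ)^h := by
    have := (one_lt_div hpg).mp h2.1; linarith
  have hD : (q:ℝ)^h < α * (p:ℝ)^g := by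
    have := (div_lt_iff₀ hpg).mp h2.2; linarith
  have case1 : e ≤ k →
      ((p ^ ℓ * q ^ k : ℕ) : ℝ) ≤ ((p ^ (ℓ + f) * q ^ (k - e) : ℕ) : ℝ) ∧
        ((p ^ (ℓ + f) * q ^ (k - e) : ℕ) : ℝ) < ((p ^ ℓ * q ^ k : ℕ) : ℝ) * α := by
    intro hk
    obtain ⟨d, rfl⟩ := Nat.exists_eq_add_of_le hk
    simp only [Nat.add_sub_cancel_left]
    push_cast
    have h1 : (0:ℝ) < (p:ℝ)^ℓ := by positivity
    have h2 : (0:ℝ) < (q:ℝ)^d := by positivity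
    rw [pow_add, pow_add]
    constructor
    · nlinarith [mul_lt_mul_of_pos_right hA (mul_pos h1 h2)]
    · nlinarith [mul_lt_mul_of_pos_right hB (mul_pos h1 h2)]
  have case2 : g ≤ ℓ →
      ((p ^ ℓ * q ^ k : ℕ) : ℝ) ≤ ((p ^ (ℓ - g) * q ^ (k + h) : ℕ) : ℝ) ∧
        ((p ^ (ℓ - g) * q ^ (k + h) : ℕ) : ℝ) < ((p ^ ℓ * q ^ k : ℕ) : ℝ) * α := by
    intro hl
    obtain ⟨d, rfl⟩ := Nat.exists_eq_add_of_le hl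
    simp only [Nat.add_sub_cancel_left]
    push_cast
    have h1 : (0:ℝ) < (p:ℝ)^d := by positivity
    have h2 : (0:ℝ) < (q:ℝ)^k := by positivity
    rw [pow_add, pow_add]
    constructor
    · nlinarith [mul_lt_mul_of_pos_right hC (mul_pos h1 h2)]
    · nlinarith [mul_lt_mul_of_pos_right hD (mul_pos h1 h2)]
  refine ⟨case1, case2, ?_⟩
  by_cases hk : e ≤ k
  · exact ⟨ℓ + f, k - e, case1 hk⟩
  · have hl : g ≤ ℓ := by
      by_contra hl
      push_neg at hk hl
      have : p ^ ℓ * q ^ k < p ^ g * q ^ e :=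
        Nat.mul_lt_mul_of_lt_of_lt (Nat.pow_lt_pow_right hp.one_lt hl)
          (Nat.pow_lt_pow_right hq.one_lt hk)
      omega
    exact ⟨ℓ - g, k + h, case2 hl⟩
end

section
/- Every interval [n, 3n/2) with integer n ≥ 1 contains an integer of the form 2^a · 3^b with a, b ≥ 0; that is, n_{2,3}(3/2) = 1. -/
lemma pred_step (a b : ℕ) (h : 3 ≤ 2 ^ a * 3 ^ b) :
    ∃ a' b', 2 ^ a' * 3 ^ b' < 2 ^ a * 3 ^ b ∧
      2 * (2 ^ a * 3 ^ b) ≤ 3 * (2 ^ a' * 3 ^ b') := by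
  cases b with
  | zero =>
    simp only [pow_zero, mul_one] at h
    have ha : 2 ≤ a := by
      by_contra hc
      interval_cases a <;> omega
    obtain ⟨c, rfl⟩ : ∃ c, a = c + 2 := ⟨a - 2, by omega⟩
    refine ⟨c, 1, ?_, ?_⟩
    · have : (0:ℕ) < 2 ^ c := pow_pos (by norm_num) _
      calc 2 ^ c * 3 ^ 1 = 3 * 2 ^ c := by ring
        _ < 4 * 2 ^ c := by nlinarith
        _ = 2 ^ (c + 2) * 3 ^ 0 := by ring
    · calc 2 * (2 ^ (c + 2) * 3 ^ 0) = 8 * 2 ^ c := by ring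
        _ ≤ 9 * 2 ^ c := by nlinarith [pow_pos (show (0:ℕ) < 2 by norm_num) c]
        _ = 3 * (2 ^ c * 3 ^ 1) := by ring
  | succ b =>
    refine ⟨a + 1, b, ?_, ?_⟩
    · have : (0:ℕ) < 2 ^ a * 3 ^ b :=
        Nat.mul_pos (pow_pos (by norm_num) _) (pow_pos (by norm_num) _)
      calc 2 ^ (a + 1) * 3 ^ b = 2 * (2 ^ a * 3 ^ b) := by ring
        _ < 3 * (2 ^ a * 3 ^ b) := by nlinarith
        _ = 2 ^ a * 3 ^ (b + 1) := by ring
    · calc 2 * (2 ^ a * 3 ^ (b + 1)) = 3 * (2 ^ (a + 1) * 3 ^ b) := by ring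
        _ ≤ 3 * (2 ^ (a + 1) * 3 ^ b) := le_refl _

lemma descend (n : ℕ) (hn : 3 ≤ n) :
    ∀ m : ℕ, (∃ a b : ℕ, m = 2 ^ a * 3 ^ b) → n ≤ m →
      ∃ a b : ℕ, n ≤ 2 ^ a * 3 ^ b ∧ 2 * (2 ^ a * 3 ^ b) < 3 * n := by
  intro m
  induction m using Nat.strong_induction_on with
  | _ m ih =>
    rintro ⟨a, b, rfl⟩ hnm
    obtain ⟨a', b', hlt, hle⟩ := pred_step a b (le_trans hn hnm)
    by_cases hv : n ≤ 2 ^ a' * 3 ^ b'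
    · exact ih _ hlt ⟨a', b', rfl⟩ hv
    · exact ⟨a, b, hnm, by omega⟩

theorem stmt_17 :
    ∀ n : ℕ, 1 ≤ n → ∃ a b : ℕ, n ≤ 2 ^ a * 3 ^ b ∧ 2 * (2 ^ a * 3 ^ b) < 3 * n := by
  intro n hn
  match n, hn with
  | 1, _ => exact ⟨0, 0, by norm_num, by norm_num⟩
  | 2, _ => exact ⟨1, 0, by norm_num, by norm_num⟩
  | (k + 3), _ =>
    have hn3 : 3 ≤ k + 3 := by omega
    have hpow : k + 3 ≤ 2 ^ (k + 3) := le_of_lt Nat.lt_two_pow_self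
    exact descend (k + 3) hn3 (2 ^ (k + 3)) ⟨k + 3, 0, by ring⟩ hpow
end
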